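/- For every N ∈ ℕ, the element φ(w_N) of A_L can be written as a product of 6N elements of S ∪ S⁻¹, where S = {ū₁, ū₂, ū₃, ū₄}; that is, there exists a list of length 6N with entries in S ∪ S⁻¹ whose product is φ(w_N). In particular the word length of φ(w_N) with respect to S is at most 6N. -/

import Mathlib

/-- The relator set of the right-angled Artin group of a simple graph `G`:
commutators of pairs of adjacent vertices. -/
def raagRels {V : Type*} (G : SimpleGraph V) : Set (FreeGroup V) :=
  {r | ∃ u v : V, G.Adj u v ∧
    r = FreeGroup.of u * FreeGroup.of v * (FreeGroup.of u)⁻¹ * (FreeGroup.of v)⁻¹}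

/-- The right-angled Artin group of a simple graph `G`. -/
abbrev RAAG {V : Type*} (G : SimpleGraph V) : Type _ :=
  PresentedGroup (raagRels G)

/-- The image `v̄` of a vertex (generator) `v` in the right-angled Artin group. -/
def RAAG.gen {V : Type*} (G : SimpleGraph V) (v : V) : RAAG G :=
  PresentedGroup.of (rels := raagRels G) v

/-- The path graph `L` on the four vertices `u₁ = 0, u₂ = 1, u₃ = 2, u₄ = 3`,
with edges `{u₁,u₂}, {u₂,u₃}, {u₃,u₄}`. -/
abbrev L : SimpleGraph (Fin 4) := SimpleGraph.pathGraph 4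

/-- The right-angled Artin group
`A_L = ⟨u₁,u₂,u₃,u₄ ∣ [u₁,u₂] = [u₂,u₃] = [u₃,u₄] = 1⟩`. -/
abbrev A_L : Type _ := RAAG L

/-- `a = ū₂⁻¹ū₁`. -/
def elt_a : A_L := (RAAG.gen L 1)⁻¹ * RAAG.gen L 0

/-- `x = ū₂⁻¹ū₃`. -/
def elt_x : A_L := (RAAG.gen L 1)⁻¹ * RAAG.gen L 2

/-- `e = ū₃⁻¹ū₄`. -/
def elt_e : A_L := (RAAG.gen L 2)⁻¹ * RAAG.gen L 3

/-- The homomorphism `φ : FreeGroup (Fin 3) →* A_L` with `φ g₀ = a`, `φ g₁ = x`,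
`φ g₂ = e`. -/
def phi : FreeGroup (Fin 3) →* A_L := FreeGroup.lift ![elt_a, elt_x, elt_e]

/-- The standard generating set `S = {ū₁, ū₂, ū₃, ū₄}` of `A_L`. -/
def genSet : Set A_L := {RAAG.gen L 0, RAAG.gen L 1, RAAG.gen L 2, RAAG.gen L 3}

lemma gen_commute {V : Type*} (G : SimpleGraph V) {i j : V} (h : G.Adj i j) :
    Commute (RAAG.gen G i) (RAAG.gen G j) := by
  have hmem : (FreeGroup.of i * FreeGroup.of j * (FreeGroup.of i)⁻¹ * (FreeGroup.of j)⁻¹)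
      ∈ Subgroup.normalClosure (raagRels G) :=
    Subgroup.subset_normalClosure ⟨i, j, h, rfl⟩
  have h1 : (QuotientGroup.mk (FreeGroup.of i * FreeGroup.of j * (FreeGroup.of i)⁻¹ *
      (FreeGroup.of j)⁻¹) : RAAG G) = 1 := (QuotientGroup.eq_one_iff _).mpr hmem
  have : RAAG.gen G i * RAAG.gen G j * (RAAG.gen G i)⁻¹ * (RAAG.gen G j)⁻¹ = 1 := by
    exact h1
  exact commutatorElement_eq_one_iff_commute.mp (by simpa [commutatorElement_def] using this)

lemma gen_calc {G : Type*} [Group G] (a b c d : G) (n : ℕ)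
    (hab : Commute a b) (hcd : Commute c d) :
    b⁻¹ * a * ((b ^ n)⁻¹ * c ^ n) * (c⁻¹ * d) * ((b ^ n)⁻¹ * c ^ n)⁻¹ =
      (b ^ n)⁻¹ * (b⁻¹ * a * d * c⁻¹) * b ^ n := by
  have h1 : a * (b ^ n)⁻¹ = (b ^ n)⁻¹ * a := ((hab.pow_right n).inv_right).eq
  have h2 : d * (c ^ n)⁻¹ = (c ^ n)⁻¹ * d := ((hcd.symm.pow_right n).inv_right).eq
  have h3 : c⁻¹ * d = d * c⁻¹ := (hcd.inv_left).eq
  calc b⁻¹ * a * ((b ^ n)⁻¹ * c ^ n) * (c⁻¹ * d) * ((b ^ n)⁻¹ * c ^ n)⁻¹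
      = b⁻¹ * (a * (b ^ n)⁻¹) * (c ^ n * c⁻¹ * (d * (c ^ n)⁻¹)) * b ^ n := by group
    _ = b⁻¹ * ((b ^ n)⁻¹ * a) * (c ^ n * c⁻¹ * ((c ^ n)⁻¹ * d)) * b ^ n := by rw [h1, h2]
    _ = (b ^ n)⁻¹ * (b⁻¹ * a * (c⁻¹ * d)) * b ^ n := by group
    _ = (b ^ n)⁻¹ * (b⁻¹ * a * (d * c⁻¹)) * b ^ n := by rw [h3]
    _ = (b ^ n)⁻¹ * (b⁻¹ * a * d * c⁻¹) * b ^ n := by group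

lemma join_replicate_prod {G : Type*} [Monoid G] (m : List G) (n : ℕ) :
    ((List.replicate n m).flatten).prod = m.prod ^ n := by
  induction n with
  | zero => simp
  | succ k ih => simp [List.replicate_succ, ih, pow_succ']

theorem stmt_8 (N : ℕ) :
    ∃ l : List A_L, l.length = 6 * N ∧ (∀ g ∈ l, g ∈ genSet ∪ genSet⁻¹) ∧
      l.prod = phi ((FreeGroup.of (0 : Fin 3) * FreeGroup.of (1 : Fin 3) ^ N
          * FreeGroup.of (2 : Fin 3) * (FreeGroup.of (1 : Fin 3) ^ N)⁻¹) ^ N) := by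
  set u0 := RAAG.gen L 0
  set u1 := RAAG.gen L 1
  set u2 := RAAG.gen L 2
  set u3 := RAAG.gen L 3
  have k01 : Commute u0 u1 := gen_commute L (by rw [SimpleGraph.pathGraph_adj]; left; rfl)
  have k12 : Commute u1 u2 := gen_commute L (by rw [SimpleGraph.pathGraph_adj]; left; rfl)
  have k23 : Commute u2 u3 := gen_commute L (by rw [SimpleGraph.pathGraph_adj]; left; rfl)
  have hpa : phi (FreeGroup.of (0 : Fin 3)) = elt_a := by simp [phi]
  have hpx : phi (FreeGroup.of (1 : Fin 3)) = elt_x := by simp [phi]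
  have hpe : phi (FreeGroup.of (2 : Fin 3)) = elt_e := by simp [phi]
  have hx : elt_x ^ N = (u1 ^ N)⁻¹ * u2 ^ N := by
    rw [elt_x, (k12.inv_left).mul_pow, inv_pow]
  set D : A_L := u1⁻¹ * u0 * u3 * u2⁻¹ with hD
  have hfac : phi (FreeGroup.of (0 : Fin 3) * FreeGroup.of (1 : Fin 3) ^ N
      * FreeGroup.of (2 : Fin 3) * (FreeGroup.of (1 : Fin 3) ^ N)⁻¹)
      = (u1 ^ N)⁻¹ * D * u1 ^ N := by
    simp only [map_mul, map_inv, map_pow, hpa, hpx, hpe]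
    rw [hx, elt_a, elt_e, hD]
    exact gen_calc u0 u1 u2 u3 N k01 k23
  have hpow : phi ((FreeGroup.of (0 : Fin 3) * FreeGroup.of (1 : Fin 3) ^ N
      * FreeGroup.of (2 : Fin 3) * (FreeGroup.of (1 : Fin 3) ^ N)⁻¹) ^ N)
      = (u1 ^ N)⁻¹ * D ^ N * u1 ^ N := by
    rw [map_pow, hfac]
    have : (u1 ^ N)⁻¹ * D * u1 ^ N = (u1 ^ N)⁻¹ * D * ((u1 ^ N)⁻¹)⁻¹ := by rw [inv_inv]
    rw [this, conj_pow, inv_inv]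
  refine ⟨List.replicate N u1⁻¹ ++ (List.replicate N [u1⁻¹, u0, u3, u2⁻¹]).flatten
    ++ List.replicate N u1, ?_, ?_, ?_⟩
  · simp only [List.length_append, List.length_replicate, List.length_flatten,
      List.map_replicate, List.length_cons, List.length_nil, List.sum_replicate, smul_eq_mul]
    ring
  · intro g hg
    have hmem : ∀ i : Fin 4, RAAG.gen L i ∈ genSet ∪ genSet⁻¹ := by
      intro i
      left
      fin_cases i <;> simp [genSet]
    have hmem' : ∀ i : Fin 4, (RAAG.gen L i)⁻¹ ∈ genSet ∪ genSet⁻¹ := by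
      intro i
      right
      rw [Set.mem_inv, inv_inv]
      fin_cases i <;> simp [genSet]
    simp only [List.mem_append, List.mem_flatten, List.mem_replicate] at hg
    rcases hg with (⟨-, rfl⟩ | ⟨m, ⟨-, rfl⟩, hgm⟩) | ⟨-, rfl⟩
    · exact hmem' 1
    · simp only [List.mem_cons, List.not_mem_nil, or_false] at hgm
      rcases hgm with rfl | rfl | rfl | rfl
      · exact hmem' 1
      · exact hmem 0
      · exact hmem 3
      · exact hmem' 2
    · exact hmem 1
  · rw [hpow]
    rw [List.prod_append, List.prod_append, List.prod_replicate, List.prod_replicate,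
      join_replicate_prod, inv_pow]
    have : ([u1⁻¹, u0, u3, u2⁻¹] : List A_L).prod = D := by simp [hD, mul_assoc]
    rw [this]
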